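/- arXiv:2108.07622 — 8 statements merged into one kernel-verified Lean document; each statement's English description precedes it below -/
import Mathlib

section
/- For every integer M ≥ 1 and reals a1 ≥ 0, a2 > 0, x > 0, the quantities e1 = a3 + a4, e2 = M·a3 + a4, e3 = M·a3² + 2·a3·a4 + a4², where a3 = a1·x/((a2+x)·(a2+x+M·a1)) and a4 = a2/(a2+x), satisfy 0 ≤ e1 ≤ e2 ≤ 1 and 0 ≤ e3 ≤ e2² ≤ 1. -/
/-- Lemma 2 of the paper: the LMMSE coefficients
`e1 = a3 + a4`, `e2 = M a3 + a4`, `e3 = M a3² + 2 a3 a4 + a4²` built from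
`a3 = a1 x /((a2+x)(a2+x+M a1))` and `a4 = a2/(a2+x)` satisfy
`0 ≤ e1 ≤ e2 ≤ 1` and `0 ≤ e3 ≤ e2² ≤ 1`. -/
theorem stmt2 (M : ℕ) (hM : 1 ≤ M) (a1 a2 x : ℝ)
    (ha1 : 0 ≤ a1) (ha2 : 0 < a2) (hx : 0 < x)
    (a3 a4 e1 e2 e3 : ℝ)
    (ha3 : a3 = a1 * x / ((a2 + x) * (a2 + x + M * a1)))
    (ha4 : a4 = a2 / (a2 + x))
    (he1 : e1 = a3 + a4)
    (he2 : e2 = M * a3 + a4)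
    (he3 : e3 = M * a3 ^ 2 + 2 * a3 * a4 + a4 ^ 2) :
    (0 ≤ e1 ∧ e1 ≤ e2 ∧ e2 ≤ 1) ∧ (0 ≤ e3 ∧ e3 ≤ e2 ^ 2 ∧ e2 ^ 2 ≤ 1) := by
  have hM1 : (1 : ℝ) ≤ M := by exact_mod_cast hM
  have hMa : (0 : ℝ) ≤ M * a1 := by positivity
  have hd : (0 : ℝ) < a2 + x := by linarith
  have hb : (0 : ℝ) < a2 + x + M * a1 := by linarith
  have ha3' : 0 ≤ a3 := by rw [ha3]; positivity
  have ha4' : 0 ≤ a4 := by rw [ha4]; positivity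
  have he2' : e2 = (M * a1 + a2) / (M * a1 + a2 + x) := by
    rw [he2, ha3, ha4]; field_simp; ring
  have he2nn : 0 ≤ e2 := by rw [he2']; positivity
  have he21 : e2 ≤ 1 := by
    rw [he2']
    rw [div_le_one (by linarith)]
    linarith
  refine ⟨⟨by rw [he1]; linarith, by rw [he1, he2]; nlinarith, he21⟩,
    ⟨by rw [he3]; positivity, ?_, by nlinarith⟩⟩
  rw [he3, he2]
  nlinarith [sq_nonneg a3, mul_nonneg ha3' ha4', mul_nonneg (mul_nonneg ha3' ha3') (sub_nonneg.2 hM1)]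
end

section
/- Fix reals c > 0, δ ≥ 0, ε ≥ 0, γ ≥ 0, x > 0 and an integer M ≥ 1. For N ∈ ℕ set a1(N) = N·c·δ, a2(N) = N·c·(ε+1) + γ, and NMSE(N) = x·(M·a1(N)·a2(N) + a2(N)² + (a1(N)+a2(N))·x) / ((a2(N)+x)·(a2(N)+x+M·a1(N))·(a1(N)+a2(N))). Then NMSE(N) → 0 as N → ∞. -/
open Filter

/-- Corollary 1 of the paper: with `a1(N) = N c δ` and
`a2(N) = N c (ε+1) + γ`, the NMSE of the LMMSE channel estimate tends to `0`
as the number of RIS elements `N → ∞`. -/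
theorem stmt6 (M : ℕ) (hM : 1 ≤ M) (c δ ε γ x : ℝ)
    (hc : 0 < c) (hδ : 0 ≤ δ) (hε : 0 ≤ ε) (hγ : 0 ≤ γ) (hx : 0 < x)
    (a1 a2 NMSE : ℕ → ℝ)
    (ha1 : ∀ N, a1 N = N * c * δ)
    (ha2 : ∀ N, a2 N = N * c * (ε + 1) + γ)
    (hNMSE : ∀ N, NMSE N = x * (M * a1 N * a2 N + a2 N ^ 2 + (a1 N + a2 N) * x) /
        ((a2 N + x) * (a2 N + x + M * a1 N) * (a1 N + a2 N))) :
    Tendsto NMSE atTop (nhds 0) := by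
  have hM' : (1 : ℝ) ≤ M := by exact_mod_cast hM
  have htend : Tendsto (fun N : ℕ => (3 * x / c) / N) atTop (nhds 0) :=
    tendsto_const_div_atTop_nhds_zero_nat (3 * x / c)
  refine tendsto_of_tendsto_of_tendsto_of_le_of_le' tendsto_const_nhds htend ?_ ?_
  · -- 0 ≤ NMSE N eventually
    filter_upwards [eventually_ge_atTop 1] with N hN
    have hn1 : (1 : ℝ) ≤ N := by exact_mod_cast hN
    have hA1 : 0 ≤ a1 N := by rw [ha1]; positivity
    have hA2 : 0 < a2 N := by
      rw [ha2]
      have hNc : c ≤ (N:ℝ) * c := by nlinarith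
      have : c ≤ (N:ℝ) * c * (ε + 1) := by nlinarith [mul_nonneg (mul_nonneg (by linarith : (0:ℝ) ≤ (N:ℝ)) hc.le) hε]
      linarith
    rw [hNMSE]
    apply div_nonneg
    · have := sq_nonneg (a2 N)
      nlinarith [mul_nonneg (mul_nonneg (Nat.cast_nonneg M : (0:ℝ) ≤ M) hA1) hA2.le,
        mul_nonneg (add_nonneg hA1 hA2.le) hx.le]
    · have h1 : 0 < a2 N + x := by linarith
      have h2 : 0 < a2 N + x + M * a1 N := by positivity
      have h3 : 0 < a1 N + a2 N := by linarith
      positivity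
  · -- NMSE N ≤ (3x/c)/N eventually
    filter_upwards [eventually_ge_atTop 1] with N hN
    have hn1 : (1 : ℝ) ≤ N := by exact_mod_cast hN
    have hn0 : (0 : ℝ) < N := by linarith
    have hA1 : 0 ≤ a1 N := by rw [ha1]; positivity
    have hA2 : 0 < a2 N := by
      rw [ha2]
      have hNc : c ≤ (N:ℝ) * c := by nlinarith
      have : c ≤ (N:ℝ) * c * (ε + 1) := by nlinarith [mul_nonneg (mul_nonneg (by linarith : (0:ℝ) ≤ (N:ℝ)) hc.le) hε]
      linarith
    have hcN : c * N ≤ a1 N + a2 N := by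
      rw [ha1, ha2]
      have h0 : 0 ≤ (N:ℝ) * c * δ := by positivity
      have h1 : 0 ≤ (N:ℝ) * c * ε := by positivity
      nlinarith
    have h1 : 0 < a2 N + x := by linarith
    have h2 : 0 < a2 N + x + M * a1 N := by positivity
    have h3 : 0 < a1 N + a2 N := by linarith
    have hnum : x * (M * a1 N * a2 N + a2 N ^ 2 + (a1 N + a2 N) * x)
        ≤ 3 * x * ((a2 N + x) * (a2 N + x + M * a1 N)) := by
      nlinarith [mul_le_mul_of_nonneg_right hM' (mul_nonneg hA1 hx.le),
        mul_nonneg (mul_nonneg (Nat.cast_nonneg M : (0:ℝ) ≤ M) hA1) hA2.le,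
        mul_nonneg (mul_nonneg (Nat.cast_nonneg M : (0:ℝ) ≤ M) hA1) hx.le,
        mul_nonneg hA2.le hx.le, sq_nonneg (a2 N), sq_nonneg x,
        mul_pos hx (mul_pos h1 h2)]
    rw [hNMSE, div_div]
    rw [div_le_div_iff₀ (by positivity) (by positivity)]
    have hD : c * N ≤ a1 N + a2 N := hcN
    calc x * (M * a1 N * a2 N + a2 N ^ 2 + (a1 N + a2 N) * x) * (c * N)
        ≤ (3 * x * ((a2 N + x) * (a2 N + x + M * a1 N))) * (a1 N + a2 N) := by
          have h12 : 0 < (a2 N + x) * (a2 N + x + M * a1 N) := mul_pos h1 h2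
          have hlhs0 : 0 ≤ x * (M * a1 N * a2 N + a2 N ^ 2 + (a1 N + a2 N) * x) := by
            nlinarith [mul_nonneg (mul_nonneg (Nat.cast_nonneg M : (0:ℝ) ≤ M) hA1) hA2.le,
              mul_nonneg (add_nonneg hA1 hA2.le) hx.le, sq_nonneg (a2 N)]
          calc x * (M * a1 N * a2 N + a2 N ^ 2 + (a1 N + a2 N) * x) * (c * N)
              ≤ (3 * x * ((a2 N + x) * (a2 N + x + M * a1 N))) * (c * N) := by
                apply mul_le_mul_of_nonneg_right hnum (by positivity)
            _ ≤ (3 * x * ((a2 N + x) * (a2 N + x + M * a1 N))) * (a1 N + a2 N) := by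
                apply mul_le_mul_of_nonneg_left hD (by positivity)
      _ = 3 * x * ((a2 N + x) * (a2 N + x + M * a1 N) * (a1 N + a2 N)) := by ring
end

section
/- Fix reals c > 0, δ ≥ 0, ε ≥ 0, γ ≥ 0, s > 0 and an integer M ≥ 1. For N ∈ ℕ set x(N) = s·N, a1(N) = N·c·δ, a2(N) = N·c·(ε+1) + γ, and NMSE(N) = x(N)·(M·a1(N)·a2(N) + a2(N)² + (a1(N)+a2(N))·x(N)) / ((a2(N)+x(N))·(a2(N)+x(N)+M·a1(N))·(a1(N)+a2(N))). Then NMSE(N) converges as N → ∞ to L = s·(M·c²·δ·(ε+1) + c²·(ε+1)² + c·(δ+ε+1)·s) / ((c·(ε+1)+s)·(c·(ε+1)+s+M·c·δ)·c·(δ+ε+1)), and L < 1. -/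
open Filter

/-- Corollary 1, eq. (25), of the paper: scaling the transmit power
as `p = E_u/N`, i.e. `x(N) = s N` with `s = σ²/(τ E_u)`, the NMSE converges as
`N → ∞` to the explicit limit `L`, which is strictly smaller than `1`. -/
theorem stmt7 (M : ℕ) (hM : 1 ≤ M) (c δ ε γ s : ℝ)
    (hc : 0 < c) (hδ : 0 ≤ δ) (hε : 0 ≤ ε) (hγ : 0 ≤ γ) (hs : 0 < s)
    (x a1 a2 NMSE : ℕ → ℝ)
    (hx : ∀ N, x N = s * N)
    (ha1 : ∀ N, a1 N = N * c * δ)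
    (ha2 : ∀ N, a2 N = N * c * (ε + 1) + γ)
    (hNMSE : ∀ N, NMSE N =
        x N * (M * a1 N * a2 N + a2 N ^ 2 + (a1 N + a2 N) * x N) /
          ((a2 N + x N) * (a2 N + x N + M * a1 N) * (a1 N + a2 N)))
    (L : ℝ)
    (hL : L = s * (M * c ^ 2 * δ * (ε + 1) + c ^ 2 * (ε + 1) ^ 2 + c * (δ + ε + 1) * s) /
        ((c * (ε + 1) + s) * (c * (ε + 1) + s + M * c * δ) * (c * (δ + ε + 1)))) :
    Tendsto NMSE atTop (nhds L) ∧ L < 1 := by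
  have hM' : (1:ℝ) ≤ M := by exact_mod_cast hM
  set b : ℝ := c * (ε + 1) with hb
  set D : ℝ := c * δ with hD
  have hb0 : 0 < b := by positivity
  have hD0 : 0 ≤ D := by positivity
  -- the limit rational function of t = γ/N
  set Fnum : ℝ → ℝ := fun t => s * (M * D * (b + t) + (b + t) ^ 2 + (D + b + t) * s)
    with hFnum
  set Fden : ℝ → ℝ := fun t => (b + t + s) * (b + t + s + M * D) * (D + b + t)
    with hFden
  have hFden_pos : ∀ t : ℝ, 0 ≤ t → 0 < Fden t := by
    intro t ht
    have h1 : 0 < b + t + s := by linarith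
    have h2 : 0 < b + t + s + M * D := by nlinarith
    have h3 : 0 < D + b + t := by linarith
    exact mul_pos (mul_pos h1 h2) h3
  have hLF : L = Fnum 0 / Fden 0 := by
    rw [hL, hFnum, hFden]; simp only [hb, hD]; ring_nf
  -- eventual equality
  have hkey : ∀ N : ℕ, 1 ≤ N → NMSE N = Fnum (γ / N) / Fden (γ / N) := by
    intro N hN
    have hn0 : (0:ℝ) < N := by exact_mod_cast hN
    have ht : 0 ≤ γ / (N:ℝ) := by positivity
    have hden2 : Fden (γ / N) ≠ 0 := ne_of_gt (hFden_pos _ ht)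
    have hden1 : (a2 N + x N) * (a2 N + x N + M * a1 N) * (a1 N + a2 N) ≠ 0 := by
      rw [ha2, hx, ha1]
      have h1 : 0 < (N:ℝ) * c * (ε + 1) + γ + s * N := by nlinarith
      have hM0 : (0:ℝ) ≤ M := by positivity
      have h2 : 0 < (N:ℝ) * c * (ε + 1) + γ + s * N + M * ((N:ℝ) * c * δ) := by
        nlinarith [mul_nonneg hM0 (by positivity : (0:ℝ) ≤ (N:ℝ) * c * δ)]
      have h3 : 0 < (N:ℝ) * c * δ + ((N:ℝ) * c * (ε + 1) + γ) := by nlinarith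
      positivity
    rw [hNMSE, div_eq_div_iff hden1 hden2, hx, ha1, ha2, hFnum, hFden]
    simp only [hb, hD]
    field_simp
    ring
  have htend : Tendsto (fun N : ℕ => Fnum (γ / N) / Fden (γ / N)) atTop (nhds L) := by
    have h0 : Tendsto (fun N : ℕ => γ / (N:ℝ)) atTop (nhds 0) :=
      tendsto_const_div_atTop_nhds_zero_nat γ
    have hcont : ContinuousAt (fun t : ℝ => Fnum t / Fden t) 0 := by
      apply ContinuousAt.div
      · fun_prop
      · fun_prop
      · exact ne_of_gt (hFden_pos 0 le_rfl)
    have := hcont.tendsto.comp h0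
    rw [hLF]
    exact this
  constructor
  · refine htend.congr' ?_
    filter_upwards [eventually_ge_atTop 1] with N hN
    exact (hkey N hN).symm
  · rw [hLF]
    have hd := hFden_pos 0 le_rfl
    rw [div_lt_one hd]
    simp only [hFnum, hFden]
    nlinarith [mul_pos hb0 hb0, mul_pos (mul_pos hb0 hb0) hb0, mul_nonneg hD0 hs.le,
      mul_nonneg (mul_nonneg hD0 hb0.le) hs.le, mul_nonneg hD0 (mul_pos hb0 hb0).le,
      mul_nonneg (mul_nonneg hD0 hD0) hb0.le, mul_nonneg (mul_nonneg hD0 hD0) hs.le,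
      mul_nonneg (mul_nonneg (by positivity : (0:ℝ) ≤ (M:ℝ)) hD0) (mul_pos hb0 hb0).le]
end

section
/- Let β > 0, α > 0, γ ≥ 0, σ² > 0, τ > 0, E_u > 0 be reals. For N ∈ ℕ set x(N) = σ²·N/(τ·E_u) and NMSE(N) = x(N)/(N·β·α + γ + x(N)). Then NMSE(N) → σ²/(τ·E_u·β·α + σ²) as N → ∞, and this limit is strictly less than 1. -/
open Filter

/-- Corollary 3 of the paper, δ = 0, power scaled as `p = E_u/N`:
with `x(N) = σ² N/(τ E_u)`, the NMSE `x(N)/(N β α + γ + x(N))` converges to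
`σ²/(τ E_u β α + σ²)` as `N → ∞`, and this limit is strictly less than `1`. -/
theorem stmt8 (β α γ σ2 τ Eu : ℝ)
    (hβ : 0 < β) (hα : 0 < α) (hγ : 0 ≤ γ) (hσ : 0 < σ2) (hτ : 0 < τ) (hEu : 0 < Eu)
    (x NMSE : ℕ → ℝ)
    (hx : ∀ N, x N = σ2 * N / (τ * Eu))
    (hNMSE : ∀ N, NMSE N = x N / (N * β * α + γ + x N)) :
    Tendsto NMSE atTop (nhds (σ2 / (τ * Eu * β * α + σ2))) ∧
      σ2 / (τ * Eu * β * α + σ2) < 1 := by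
  have hτE : (0:ℝ) < τ * Eu := mul_pos hτ hEu
  have hden : (0:ℝ) < τ * Eu * β * α + σ2 := by positivity
  constructor
  · have hne : β * α + 0 + σ2 / (τ * Eu) ≠ 0 := by positivity
    have h1 : Tendsto (fun N : ℕ => σ2 / (τ * Eu) / (β * α + γ / N + σ2 / (τ * Eu)))
        atTop (nhds (σ2 / (τ * Eu) / (β * α + 0 + σ2 / (τ * Eu)))) :=
      Tendsto.div tendsto_const_nhds
        ((tendsto_const_nhds.add (tendsto_const_div_atTop_nhds_zero_nat γ)).add
          tendsto_const_nhds) hne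
    have hval : σ2 / (τ * Eu) / (β * α + 0 + σ2 / (τ * Eu))
        = σ2 / (τ * Eu * β * α + σ2) := by
      rw [div_eq_div_iff hne (ne_of_gt hden)]
      field_simp
      ring
    rw [hval] at h1
    refine h1.congr' ?_
    filter_upwards [eventually_ge_atTop 1] with N hN
    have hN0 : (0:ℝ) < (N:ℝ) := by exact_mod_cast hN
    rw [hNMSE, hx]
    have hd : (N:ℝ) * β * α + γ + σ2 * N / (τ * Eu) > 0 := by positivity
    rw [div_eq_div_iff (by positivity) (ne_of_gt hd)]
    field_simp
  · rw [div_lt_one hden]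
    nlinarith [mul_pos (mul_pos hτE hβ) hα]
end

section
/- With the Corollary-5 closed-form SINR defined in the context (δ = 0, fixed transmit power p > 0, hence fixed x = σ²/(τp)), and assuming each H_i : ℕ → ℝ is nonnegative and bounded, the SINR of user k satisfies SINR_k(N) → M·α_k / (∑_{i=1}^{K} α_i) as the number of RIS elements N → ∞. -/
open Filter

/-- limit (43) of the paper, from Corollary 5 with δ = 0 and fixed
transmit power: the closed-form SINR of user `k` satisfies
`SINR_k(N) → M α_k / ∑ᵢ α_i` as the number of RIS elements `N → ∞`. -/
theorem stmt9 (K : ℕ) (hK : 1 ≤ K) (M : ℕ) (hM : 1 ≤ M)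
    (β : ℝ) (hβ : 0 < β)
    (α γ ε : Fin K → ℝ)
    (hα : ∀ i, 0 < α i) (hγ : ∀ i, 0 ≤ γ i) (hε : ∀ i, 0 ≤ ε i)
    (c : Fin K → ℝ) (hc : ∀ i, c i = β * α i / (ε i + 1))
    (k : Fin K) (σ2 τ p : ℝ) (hσ : 0 < σ2) (hτ : 0 < τ) (hp : 0 < p)
    (x : ℝ) (hx : x = σ2 / (τ * p))
    (H : Fin K → ℕ → ℝ)
    (hHnn : ∀ i N, 0 ≤ H i N)
    (hHbd : ∀ i, ∃ C : ℝ, ∀ N, H i N ≤ C)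
    (e1 S E L : ℕ → ℝ) (I : Fin K → ℕ → ℝ) (SINR : ℕ → ℝ)
    (he1 : ∀ N : ℕ, e1 N = (N * β * α k + γ k) / (N * β * α k + γ k + x))
    (hS : ∀ N : ℕ, S N = M * (N * β * α k + γ k) ^ 2 * e1 N)
    (hE : ∀ N : ℕ, E N = N * β * α k + γ k)
    (hL : ∀ N : ℕ, L N =
        ((N : ℝ) ^ 2 * c k ^ 2 * (ε k + 1) ^ 2
          + M * N * c k ^ 2 * (2 * ε k + 1)
          + N * c k * (c k * (2 * ε k + 1) + (2 * γ k + x) * (ε k + 1))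
          + γ k * (γ k + x)) * e1 N)
    (hI : ∀ i, i ≠ k → ∀ N : ℕ, I i N =
        ((N : ℝ) ^ 2 * c k * c i * (ε k + 1) * (ε i + 1)
          + M * N * c k * c i * (ε k + ε i + 1)
          + M * c k * c i * ε k * ε i * H i N
          + N * ((γ k + x) * c i * (ε i + 1) + γ i * c k * (ε k + 1))
          + γ i * (γ k + x)) * e1 N)
    (hSINR : ∀ N : ℕ, SINR N =
        p * S N / (p * L N + p * (∑ i ∈ Finset.univ.erase k, I i N) + σ2 * E N)) :
    Tendsto SINR atTop (nhds (M * α k / ∑ i, α i)) := by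
  classical
  have hx0 : 0 < x := by rw [hx]; positivity
  have hαk : 0 < α k := hα k
  have hγk : 0 ≤ γ k := hγ k
  have hεk : 0 ≤ ε k := hε k
  set A : ℝ := β * α k with hAdef
  have hA0 : 0 < A := by positivity
  choose C hCbd using hHbd
  have hc0 : ∀ i, 0 < c i := by
    intro i
    rw [hc i]
    have := hε i
    have := hα i
    positivity
  -- basic facts about e1
  have he1nn : ∀ N : ℕ, 0 ≤ e1 N := by
    intro N
    rw [he1 N]
    have h1 : (0:ℝ) ≤ (N : ℝ) * β * α k + γ k := by positivity
    have h2 : (0:ℝ) < (N : ℝ) * β * α k + γ k + x := by linarith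
    positivity
  have he1le : ∀ N : ℕ, e1 N ≤ 1 := by
    intro N
    rw [he1 N]
    have h1 : (0:ℝ) ≤ (N : ℝ) * β * α k + γ k := by positivity
    have h2 : (0:ℝ) < (N : ℝ) * β * α k + γ k + x := by linarith
    rw [div_le_one h2]
    linarith
  -- limit helpers
  have hu : Tendsto (fun N : ℕ => (1:ℝ) / N) atTop (nhds 0) :=
    tendsto_one_div_atTop_nhds_zero_nat
  have hq : ∀ a b d : ℝ,
      Tendsto (fun N : ℕ => a + b * (1 / (N:ℝ)) + d * (1 / (N:ℝ)) ^ 2) atTop (nhds a) := by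
    intro a b d
    have := ((tendsto_const_nhds : Tendsto (fun _ : ℕ => a) atTop (nhds a)).add
      ((hu.const_mul b))).add ((hu.pow 2).const_mul d)
    simpa using this
  -- e1 tends to 1
  have he1ev : e1 =ᶠ[atTop] fun N : ℕ =>
      (A + γ k * (1 / (N:ℝ))) / (A + γ k * (1 / (N:ℝ)) + x * (1 / (N:ℝ))) := by
    filter_upwards [eventually_ge_atTop 1] with N hN
    have hn0 : (0:ℝ) < (N:ℝ) := by exact_mod_cast hN
    have hn' : (N:ℝ) ≠ 0 := ne_of_gt hn0
    rw [he1 N]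
    have h2 : (0:ℝ) < (N : ℝ) * β * α k + γ k + x := by positivity
    have hinv : (0:ℝ) ≤ 1 / (N:ℝ) := by positivity
    have h3 : (0:ℝ) < A + γ k * (1 / (N:ℝ)) + x * (1 / (N:ℝ)) := by positivity
    rw [div_eq_div_iff h2.ne' h3.ne']
    field_simp
    ring
  have he1t : Tendsto e1 atTop (nhds 1) := by
    have hg : Tendsto (fun N : ℕ => A + γ k * (1 / (N:ℝ))) atTop (nhds A) := by
      have := (tendsto_const_nhds : Tendsto (fun _ : ℕ => A) atTop (nhds A)).add
        (hu.const_mul (γ k))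
      simpa using this
    have hg2 : Tendsto (fun N : ℕ => A + γ k * (1 / (N:ℝ)) + x * (1 / (N:ℝ))) atTop
        (nhds A) := by
      have := hg.add (hu.const_mul x)
      simpa using this
    have := hg.div hg2 hA0.ne'
    rw [div_self hA0.ne'] at this
    exact this.congr' he1ev.symm
  have hg : Tendsto (fun N : ℕ => A + γ k * (1 / (N:ℝ))) atTop (nhds A) := by
    have := (tendsto_const_nhds : Tendsto (fun _ : ℕ => A) atTop (nhds A)).add
      (hu.const_mul (γ k))
    simpa using this
  -- auxiliary functions
  set Lfun : ℕ → ℝ := fun N =>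
      (c k ^ 2 * (ε k + 1) ^ 2
        + (M * c k ^ 2 * (2 * ε k + 1)
            + c k * (c k * (2 * ε k + 1) + (2 * γ k + x) * (ε k + 1))) * (1 / (N:ℝ))
        + γ k * (γ k + x) * (1 / (N:ℝ)) ^ 2) * e1 N with hLfun
  set Ifun : Fin K → ℕ → ℝ := fun i N =>
      (c k * c i * (ε k + 1) * (ε i + 1)
        + (M * c k * c i * (ε k + ε i + 1)
            + ((γ k + x) * c i * (ε i + 1) + γ i * c k * (ε k + 1))) * (1 / (N:ℝ))
        + γ i * (γ k + x) * (1 / (N:ℝ)) ^ 2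
        + (M * c k * c i * ε k * ε i) * H i N * (1 / (N:ℝ)) ^ 2) * e1 N with hIfun
  set Efun : ℕ → ℝ := fun N => A * (1 / (N:ℝ)) + γ k * (1 / (N:ℝ)) ^ 2 with hEfun
  set numf : ℕ → ℝ := fun N => p * M * (A + γ k * (1 / (N:ℝ))) ^ 2 * e1 N with hnumf
  set denf : ℕ → ℝ := fun N =>
      p * Lfun N + p * (∑ i ∈ Finset.univ.erase k, Ifun i N) + σ2 * Efun N with hdenf
  -- eventual equality of SINR with numf / denf
  have hev : SINR =ᶠ[atTop] fun N => numf N / denf N := by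
    filter_upwards [eventually_ge_atTop 1] with N hN
    have hn0 : (0:ℝ) < (N:ℝ) := by exact_mod_cast hN
    have hn' : (N:ℝ) ≠ 0 := ne_of_gt hn0
    have hS' : numf N * (N:ℝ) ^ 2 = p * S N := by
      rw [hnumf, hS N]
      field_simp
      ring
    have hL' : Lfun N * (N:ℝ) ^ 2 = L N := by
      rw [hLfun, hL N]
      field_simp
      ring
    have hI' : (∑ i ∈ Finset.univ.erase k, Ifun i N) * (N:ℝ) ^ 2
        = ∑ i ∈ Finset.univ.erase k, I i N := by
      rw [Finset.sum_mul]
      refine Finset.sum_congr rfl fun i hi => ?_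
      have hik : i ≠ k := Finset.ne_of_mem_erase hi
      rw [hIfun, hI i hik N]
      field_simp
      ring
    have hE' : Efun N * (N:ℝ) ^ 2 = E N := by
      rw [hEfun, hE N]
      field_simp
      ring
    have hden' : denf N * (N:ℝ) ^ 2
        = p * L N + p * (∑ i ∈ Finset.univ.erase k, I i N) + σ2 * E N := by
      rw [hdenf]
      calc (p * Lfun N + p * (∑ i ∈ Finset.univ.erase k, Ifun i N) + σ2 * Efun N)
            * (N:ℝ) ^ 2
          = p * (Lfun N * (N:ℝ) ^ 2)
            + p * ((∑ i ∈ Finset.univ.erase k, Ifun i N) * (N:ℝ) ^ 2)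
            + σ2 * (Efun N * (N:ℝ) ^ 2) := by ring
        _ = _ := by rw [hL', hI', hE']
    rw [hSINR N, ← hS', ← hden',
      mul_div_mul_right _ _ (pow_ne_zero 2 hn')]
  -- limits of the pieces
  have hnumt : Tendsto numf atTop (nhds (p * M * A ^ 2)) := by
    have := ((tendsto_const_nhds : Tendsto (fun _ : ℕ => p * (M:ℝ)) atTop (nhds (p * M))).mul
      (hg.pow 2)).mul he1t
    simpa [hnumf] using this
  have hLt : Tendsto Lfun atTop (nhds (c k ^ 2 * (ε k + 1) ^ 2)) := by
    have := (hq (c k ^ 2 * (ε k + 1) ^ 2)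
        (M * c k ^ 2 * (2 * ε k + 1)
          + c k * (c k * (2 * ε k + 1) + (2 * γ k + x) * (ε k + 1)))
        (γ k * (γ k + x))).mul he1t
    simpa [hLfun] using this
  have hIt : ∀ i ∈ Finset.univ.erase k,
      Tendsto (fun N => Ifun i N) atTop
        (nhds (c k * c i * (ε k + 1) * (ε i + 1))) := by
    intro i _
    have hHt : Tendsto
        (fun N : ℕ => (M * c k * c i * ε k * ε i) * H i N * (1 / (N:ℝ)) ^ 2)
        atTop (nhds 0) := by
      have hB0 : (0:ℝ) ≤ M * c k * c i * ε k * ε i := by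
        have := hc0 k
        have := hc0 i
        have := hε k
        have := hε i
        positivity
      refine squeeze_zero (g := fun N : ℕ =>
          (M * c k * c i * ε k * ε i * max (C i) 0) * (1 / (N:ℝ)) ^ 2)
          (fun N => by have h0 := hHnn i N; positivity) ?_ ?_
      · intro N
        have hHb : H i N ≤ max (C i) 0 := le_trans (hCbd i N) (le_max_left _ _)
        have h0 : (0:ℝ) ≤ H i N := hHnn i N
        have hinv : (0:ℝ) ≤ (1 / (N:ℝ)) ^ 2 := by positivity
        have := mul_le_mul_of_nonneg_right
          (mul_le_mul_of_nonneg_left hHb hB0) hinv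
        linarith
      · have := (hu.pow 2).const_mul (M * c k * c i * ε k * ε i * max (C i) 0)
        simpa using this
    have hpoly := hq (c k * c i * (ε k + 1) * (ε i + 1))
        (M * c k * c i * (ε k + ε i + 1)
          + ((γ k + x) * c i * (ε i + 1) + γ i * c k * (ε k + 1)))
        (γ i * (γ k + x))
    have := (hpoly.add hHt).mul he1t
    simpa [hIfun, add_assoc] using this
  have hEt : Tendsto Efun atTop (nhds 0) := by
    have := (hu.const_mul A).add ((hu.pow 2).const_mul (γ k))
    simpa [hEfun] using this
  set ℓ : ℝ := p * (c k ^ 2 * (ε k + 1) ^ 2)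
      + p * (∑ i ∈ Finset.univ.erase k, c k * c i * (ε k + 1) * (ε i + 1))
      + σ2 * 0 with hldef
  have hdent : Tendsto denf atTop (nhds ℓ) := by
    exact (((tendsto_const_nhds : Tendsto (fun _ : ℕ => p) atTop (nhds p)).mul hLt).add
      ((tendsto_const_nhds : Tendsto (fun _ : ℕ => p) atTop (nhds p)).mul
        (tendsto_finset_sum _ hIt))).add
      ((tendsto_const_nhds : Tendsto (fun _ : ℕ => σ2) atTop (nhds σ2)).mul hEt)
  -- value of ℓ
  have hce : ∀ i, c i * (ε i + 1) = β * α i := by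
    intro i
    have h1 : ε i + 1 ≠ 0 := by have := hε i; positivity
    rw [hc i]
    field_simp
  have hsumα : ∑ i, α i = α k + ∑ i ∈ Finset.univ.erase k, α i :=
    (Finset.add_sum_erase _ _ (Finset.mem_univ k)).symm
  have hl : ℓ = p * β ^ 2 * α k * ∑ i, α i := by
    rw [hldef]
    have h1 : c k ^ 2 * (ε k + 1) ^ 2 = (β * α k) ^ 2 := by
      rw [← hce k]; ring
    have h2 : ∀ i ∈ Finset.univ.erase k,
        c k * c i * (ε k + 1) * (ε i + 1) = β ^ 2 * α k * α i := by
      intro i _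
      have e1' := hce k
      have e2' := hce i
      calc c k * c i * (ε k + 1) * (ε i + 1)
          = (c k * (ε k + 1)) * (c i * (ε i + 1)) := by ring
        _ = (β * α k) * (β * α i) := by rw [e1', e2']
        _ = β ^ 2 * α k * α i := by ring
    rw [Finset.sum_congr rfl h2, h1, hsumα, ← Finset.mul_sum]
    ring
  have hsum0 : (0:ℝ) < ∑ i, α i := by
    have hne : (Finset.univ : Finset (Fin K)).Nonempty := by
      refine ⟨⟨0, ?_⟩, Finset.mem_univ _⟩
      exact hK
    exact Finset.sum_pos (fun i _ => hα i) hne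
  have hl0 : ℓ ≠ 0 := by
    rw [hl]
    positivity
  have key : Tendsto SINR atTop (nhds (p * M * A ^ 2 / ℓ)) :=
    (hnumt.div hdent hl0).congr' hev.symm
  have hval : p * M * A ^ 2 / ℓ = M * α k / ∑ i, α i := by
    rw [hl, hAdef]
    field_simp
  rwa [hval] at key
end

section
/- With the Corollary-5 closed-form SINR defined in the context (δ = 0), scale the transmit power as p(N) = E_u/N for a constant E_u > 0, so that x(N) = σ²·N/(τ·E_u). Then, assuming each H_i : ℕ → ℝ is nonnegative and bounded, SINR_k(N) → E_u·M·β·α_k / (∑_{i=1}^{K} (E_u·β·α_i + (α_i/α_k)·(σ²/τ)) + σ²·(1 + σ²/(τ·E_u·β·α_k))) as the number of RIS elements N → ∞ (the '1/N power scaling law' of Corollary 7). -/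
open Filter

set_option maxHeartbeats 1000000

/-- Corollary 7 of the paper, the `1/N` power scaling law for δ = 0:
scaling the transmit power as `p(N) = E_u/N`, so `x(N) = σ² N/(τ E_u)`, the
closed-form SINR of user `k` converges as `N → ∞` to
`E_u M β α_k / (∑ᵢ (E_u β α_i + (α_i/α_k)(σ²/τ)) + σ²(1 + σ²/(τ E_u β α_k)))`. -/
theorem stmt10 (K : ℕ) (hK : 1 ≤ K) (M : ℕ) (hM : 1 ≤ M)
    (β : ℝ) (hβ : 0 < β)
    (α γ ε : Fin K → ℝ)
    (hα : ∀ i, 0 < α i) (hγ : ∀ i, 0 ≤ γ i) (hε : ∀ i, 0 ≤ ε i)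
    (c : Fin K → ℝ) (hc : ∀ i, c i = β * α i / (ε i + 1))
    (k : Fin K) (σ2 τ Eu : ℝ) (hσ : 0 < σ2) (hτ : 0 < τ) (hEu : 0 < Eu)
    (p x : ℕ → ℝ)
    (hp : ∀ N : ℕ, p N = Eu / N)
    (hx : ∀ N : ℕ, x N = σ2 * N / (τ * Eu))
    (H : Fin K → ℕ → ℝ)
    (hHnn : ∀ i N, 0 ≤ H i N)
    (hHbd : ∀ i, ∃ C : ℝ, ∀ N, H i N ≤ C)
    (e1 S E L : ℕ → ℝ) (I : Fin K → ℕ → ℝ) (SINR : ℕ → ℝ)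
    (he1 : ∀ N : ℕ, e1 N = (N * β * α k + γ k) / (N * β * α k + γ k + x N))
    (hS : ∀ N : ℕ, S N = M * (N * β * α k + γ k) ^ 2 * e1 N)
    (hE : ∀ N : ℕ, E N = N * β * α k + γ k)
    (hL : ∀ N : ℕ, L N =
        ((N : ℝ) ^ 2 * c k ^ 2 * (ε k + 1) ^ 2
          + M * N * c k ^ 2 * (2 * ε k + 1)
          + N * c k * (c k * (2 * ε k + 1) + (2 * γ k + x N) * (ε k + 1))
          + γ k * (γ k + x N)) * e1 N)
    (hI : ∀ i, i ≠ k → ∀ N : ℕ, I i N =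
        ((N : ℝ) ^ 2 * c k * c i * (ε k + 1) * (ε i + 1)
          + M * N * c k * c i * (ε k + ε i + 1)
          + M * c k * c i * ε k * ε i * H i N
          + N * ((γ k + x N) * c i * (ε i + 1) + γ i * c k * (ε k + 1))
          + γ i * (γ k + x N)) * e1 N)
    (hSINR : ∀ N : ℕ, SINR N =
        p N * S N / (p N * L N + p N * (∑ i ∈ Finset.univ.erase k, I i N) + σ2 * E N)) :
    Tendsto SINR atTop
      (nhds (Eu * M * β * α k /
        ((∑ i, (Eu * β * α i + α i / α k * (σ2 / τ))) + σ2 * (1 + σ2 / (τ * Eu * β * α k))))) := by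

  haveI : Nonempty (Fin K) := ⟨⟨0, hK⟩⟩
  have hτEu : (0:ℝ) < τ * Eu := mul_pos hτ hEu
  have hak : (0:ℝ) < β * α k := mul_pos hβ (hα k)
  have hs' : (0:ℝ) < σ2 / (τ * Eu) := div_pos hσ hτEu
  have has : (0:ℝ) < β * α k + σ2 / (τ * Eu) := by linarith
  have hεp : ∀ i, (0:ℝ) < ε i + 1 := fun i => by linarith [hε i]
  have hci : ∀ i, (0:ℝ) < c i := fun i => by
    rw [hc i]; exact div_pos (mul_pos hβ (hα i)) (hεp i)
  have hprod : ∀ i, c i * (ε i + 1) = β * α i := fun i => by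
    rw [hc i, div_mul_cancel₀ _ (hεp i).ne']
  have hu : Tendsto (fun N : ℕ => ((N:ℝ))⁻¹) atTop (nhds 0) :=
    tendsto_inv_atTop_zero.comp tendsto_natCast_atTop_atTop
  have hpoly : ∀ c0 c1 c2 : ℝ,
      Tendsto (fun N : ℕ => c0 + ((N:ℝ))⁻¹ * c1 + (((N:ℝ))⁻¹)^2 * c2) atTop (nhds c0) := by
    intro c0 c1 c2
    have h := ((tendsto_const_nhds (x := c0) (f := (atTop : Filter ℕ))).add
      (hu.mul_const c1)).add ((hu.pow 2).mul_const c2)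
    simpa using h
  have hxnn : ∀ N : ℕ, 0 ≤ x N := fun N => by
    rw [hx N]; exact div_nonneg (mul_nonneg hσ.le (Nat.cast_nonneg N)) hτEu.le
  have hdenpos : ∀ N : ℕ, 1 ≤ N → (0:ℝ) < ↑N * β * α k + γ k + x N := by
    intro N hN
    have h1 : (1:ℝ) ≤ (N:ℝ) := by exact_mod_cast hN
    have h2 : β * α k ≤ ↑N * β * α k := by nlinarith
    have := hγ k; have := hxnn N; linarith
  have he1nn : ∀ N : ℕ, 1 ≤ N → 0 ≤ e1 N := by
    intro N hN; rw [he1 N]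
    have h1 : (0:ℝ) ≤ (N:ℝ) := Nat.cast_nonneg N
    have h2 : (0:ℝ) ≤ ↑N * β * α k + γ k := by nlinarith [hγ k, hak]
    exact div_nonneg h2 (hdenpos N hN).le
  have he1le : ∀ N : ℕ, 1 ≤ N → e1 N ≤ 1 := by
    intro N hN; rw [he1 N]
    rw [div_le_one (hdenpos N hN)]
    linarith [hxnn N]
  have hnum : Tendsto (fun N : ℕ => β * α k + γ k * ((N:ℝ))⁻¹) atTop (nhds (β * α k)) := by
    simpa using (tendsto_const_nhds (x := β * α k) (f := (atTop : Filter ℕ))).add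
      (hu.const_mul (γ k))
  have hden2 : Tendsto (fun N : ℕ => β * α k + σ2/(τ*Eu) + γ k * ((N:ℝ))⁻¹) atTop
      (nhds (β * α k + σ2/(τ*Eu))) := by
    simpa using (tendsto_const_nhds (x := β * α k + σ2/(τ*Eu)) (f := (atTop : Filter ℕ))).add
      (hu.const_mul (γ k))
  have he1t : Tendsto e1 atTop (nhds ((β*α k)/(β*α k + σ2/(τ*Eu)))) := by
    apply Tendsto.congr' _ (hnum.div hden2 has.ne')
    filter_upwards [eventually_ge_atTop 1] with N hN
    simp only [Pi.div_apply]
    have hn : (0:ℝ) < N := by exact_mod_cast Nat.lt_of_lt_of_le Nat.zero_lt_one hN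
    have hd := hdenpos N hN
    rw [hx N] at hd
    have h1 : (0:ℝ) < β*α k + σ2/(τ*Eu) + γ k * ((N:ℝ))⁻¹ := by
      have : (0:ℝ) ≤ γ k * ((N:ℝ))⁻¹ := mul_nonneg (hγ k) (by positivity)
      linarith
    rw [he1 N, hx N, div_eq_div_iff h1.ne' hd.ne']
    field_simp
    ring
  -- numerator
  have TA : Tendsto (fun N : ℕ => p N * S N / ↑N) atTop
      (nhds (Eu * ↑M * (β*α k)^2 * ((β*α k)/(β*α k + σ2/(τ*Eu))))) := by
    have base := ((hnum.pow 2).const_mul (Eu * (M:ℝ))).mul he1t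
    apply Tendsto.congr' _ base
    filter_upwards [eventually_ge_atTop 1] with N hN
    have hn : (0:ℝ) < N := by exact_mod_cast Nat.lt_of_lt_of_le Nat.zero_lt_one hN
    rw [hp N, hS N]
    field_simp
  -- L term
  have T1 : Tendsto (fun N : ℕ => p N * L N / ↑N) atTop (nhds (Eu * (β*α k)^2)) := by
    have base := ((hpoly (c k^2*(ε k+1)^2 + σ2/(τ*Eu)*(c k*(ε k+1)))
        ((M:ℝ)*(c k^2*(2*ε k+1)) + c k*(c k*(2*ε k+1) + 2*γ k*(ε k+1)) + γ k*(σ2/(τ*Eu)))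
        (γ k*γ k)).const_mul Eu).mul he1t
    have hval : Eu * (c k^2*(ε k+1)^2 + σ2/(τ*Eu)*(c k*(ε k+1))) * ((β*α k)/(β*α k + σ2/(τ*Eu)))
        = Eu * (β*α k)^2 := by
      rw [show c k^2*(ε k+1)^2 = (c k*(ε k+1))^2 from by ring, hprod k]
      field_simp
      linear_combination (α k ^ 2) * mul_inv_cancel₀ (add_pos (mul_pos (mul_pos (mul_pos (hα k) hEu) hβ) hτ) hσ).ne'
    rw [hval] at base
    apply Tendsto.congr' _ base
    filter_upwards [eventually_ge_atTop 1] with N hN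
    have hn : (0:ℝ) < N := by exact_mod_cast Nat.lt_of_lt_of_le Nat.zero_lt_one hN
    rw [hp N, hL N, hx N]
    field_simp
    ring
  -- E term
  have T3 : Tendsto (fun N : ℕ => σ2 * E N / ↑N) atTop (nhds (σ2 * (β*α k))) := by
    have base := hnum.const_mul σ2
    apply Tendsto.congr' _ base
    filter_upwards [eventually_ge_atTop 1] with N hN
    have hn : (0:ℝ) < N := by exact_mod_cast Nat.lt_of_lt_of_le Nat.zero_lt_one hN
    rw [hE N, mul_div_assoc]
    congr 1
    field_simp
  -- interference terms
  have T2 : ∀ i ∈ Finset.univ.erase k, Tendsto (fun N : ℕ => p N * I i N / ↑N) atTop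
      (nhds (Eu * ((β*α k) * (β*α i)))) := by
    intro i hi
    have hik : i ≠ k := Finset.ne_of_mem_erase hi
    obtain ⟨C, hC⟩ := hHbd i
    have hCnn : (0:ℝ) ≤ C := le_trans (hHnn i 0) (hC 0)
    have hpre : (0:ℝ) ≤ Eu * ↑M * c k * c i * ε k * ε i :=
      mul_nonneg (mul_nonneg (mul_nonneg (mul_nonneg
        (mul_nonneg hEu.le (Nat.cast_nonneg M)) (hci k).le) (hci i).le) (hε k)) (hε i)
    have hH0 : Tendsto
        (fun N : ℕ => Eu * ↑M * c k * c i * ε k * ε i * H i N * (((N:ℝ))⁻¹)^2 * e1 N)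
        atTop (nhds 0) := by
      apply squeeze_zero'
        (g := fun N : ℕ => Eu * ↑M * c k * c i * ε k * ε i * C * (((N:ℝ))⁻¹)^2)
      · filter_upwards [eventually_ge_atTop 1] with N hN
        exact mul_nonneg (mul_nonneg (mul_nonneg hpre (hHnn i N)) (by positivity))
          (he1nn N hN)
      · filter_upwards [eventually_ge_atTop 1] with N hN
        have h1 : Eu * ↑M * c k * c i * ε k * ε i * H i N
            ≤ Eu * ↑M * c k * c i * ε k * ε i * C :=
          mul_le_mul_of_nonneg_left (hC N) hpre
        have h2 := mul_le_mul_of_nonneg_right h1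
          (show (0:ℝ) ≤ (((N:ℝ))⁻¹)^2 by positivity)
        calc Eu * ↑M * c k * c i * ε k * ε i * H i N * (((N:ℝ))⁻¹)^2 * e1 N
            ≤ Eu * ↑M * c k * c i * ε k * ε i * C * (((N:ℝ))⁻¹)^2 * e1 N :=
              mul_le_mul_of_nonneg_right h2 (he1nn N hN)
          _ ≤ Eu * ↑M * c k * c i * ε k * ε i * C * (((N:ℝ))⁻¹)^2 :=
              mul_le_of_le_one_right
                (mul_nonneg (mul_nonneg hpre hCnn) (by positivity)) (he1le N hN)
      · simpa using (hu.pow 2).const_mul (Eu * (M:ℝ) * c k * c i * ε k * ε i * C)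
    have base := ((hpoly (c k*c i*(ε k+1)*(ε i+1) + σ2/(τ*Eu)*(c i*(ε i+1)))
        ((M:ℝ)*(c k*c i*(ε k+ε i+1)) + γ k*(c i*(ε i+1)) + γ i*(c k*(ε k+1)) + γ i*(σ2/(τ*Eu)))
        (γ i*γ k)).const_mul Eu).mul he1t
    have hval : Eu * (c k*c i*(ε k+1)*(ε i+1) + σ2/(τ*Eu)*(c i*(ε i+1)))
        * ((β*α k)/(β*α k + σ2/(τ*Eu))) = Eu * ((β*α k) * (β*α i)) := by
      rw [show c k*c i*(ε k+1)*(ε i+1) = (c k*(ε k+1))*(c i*(ε i+1)) from by ring,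
        hprod k, hprod i]
      field_simp
      linear_combination (α k * α i) * mul_inv_cancel₀ (add_pos (mul_pos (mul_pos (mul_pos (hα k) hEu) hβ) hτ) hσ).ne'
    rw [hval] at base
    have base2 := base.add hH0
    rw [add_zero] at base2
    apply Tendsto.congr' _ base2
    filter_upwards [eventually_ge_atTop 1] with N hN
    have hn : (0:ℝ) < N := by exact_mod_cast Nat.lt_of_lt_of_le Nat.zero_lt_one hN
    rw [hp N, hI i hik N, hx N]
    field_simp
    ring
  have TS := tendsto_finset_sum (Finset.univ.erase k) T2
  have TB : Tendsto (fun N : ℕ =>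
      (p N * L N + p N * (∑ i ∈ Finset.univ.erase k, I i N) + σ2 * E N) / ↑N) atTop
      (nhds (Eu*(β*α k)^2 + (∑ i ∈ Finset.univ.erase k, Eu*((β*α k)*(β*α i))) + σ2*(β*α k))) := by
    have h := (T1.add TS).add T3
    apply h.congr
    intro N
    rw [add_div, add_div, Finset.mul_sum, Finset.sum_div]
  have hT : (0:ℝ) < ∑ i, β * α i :=
    Finset.sum_pos (fun i _ => mul_pos hβ (hα i)) Finset.univ_nonempty
  have hsumerase : ∑ i ∈ Finset.univ.erase k, Eu*((β*α k)*(β*α i))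
      = Eu*((β*α k)*(∑ i, β*α i)) - Eu*((β*α k)*(β*α k)) := by
    rw [Finset.sum_erase_eq_sub (Finset.mem_univ k), ← Finset.mul_sum, ← Finset.mul_sum]
  have hLbpos : (0:ℝ) < Eu*(β*α k)^2
      + (∑ i ∈ Finset.univ.erase k, Eu*((β*α k)*(β*α i))) + σ2*(β*α k) := by
    rw [hsumerase]
    nlinarith [mul_pos (mul_pos hEu hak) hT, mul_pos hσ hak]
  have main := TA.div TB hLbpos.ne'
  have hqq : ∀ A B n : ℝ, n ≠ 0 → A/n/(B/n) = A/B := by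
    intro A B n hn
    rcases eq_or_ne B 0 with rfl|hB
    · simp
    · field_simp
  have eqS : ∀ᶠ N in atTop, (p N * S N / ↑N) /
      ((p N * L N + p N * (∑ i ∈ Finset.univ.erase k, I i N) + σ2 * E N) / ↑N) = SINR N := by
    filter_upwards [eventually_ge_atTop 1] with N hN
    have hn : ((N:ℝ)) ≠ 0 := by
      have : (0:ℝ) < N := by exact_mod_cast Nat.lt_of_lt_of_le Nat.zero_lt_one hN
      exact this.ne'
    rw [hSINR N]
    exact hqq _ _ _ hn
  have main2 := Filter.Tendsto.congr' eqS main
  convert main2 using 2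
  have hsumall : (∑ i, (Eu*β*α i + α i/α k*(σ2/τ)))
      = (Eu + σ2/(τ*(β*α k))) * ∑ i, β*α i := by
    rw [Finset.mul_sum]
    refine Finset.sum_congr rfl fun i _ => ?_
    field_simp [(hα k).ne', hτ.ne', hβ.ne', hEu.ne']
  rw [hsumerase, hsumall]
  have hd2 : (0:ℝ) < (Eu + σ2/(τ*(β*α k))) * (∑ i, β*α i)
      + σ2*(1+σ2/(τ*Eu*β*α k)) := by
    have h1 : (0:ℝ) < Eu + σ2/(τ*(β*α k)) := by
      have := div_pos hσ (mul_pos hτ hak); linarith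
    have h2 : (0:ℝ) < 1 + σ2/(τ*Eu*β*α k) := by
      have := div_pos hσ (mul_pos (mul_pos hτEu hβ) (hα k)); linarith
    exact add_pos (mul_pos h1 hT) (mul_pos hσ h2)
  have hd1 : (0:ℝ) < Eu*(β*α k)^2
      + (Eu*((β*α k)*(∑ i, β*α i)) - Eu*((β*α k)*(β*α k))) + σ2*(β*α k) := by
    nlinarith [mul_pos (mul_pos hEu hak) hT, mul_pos hσ hak]
  rw [div_eq_div_iff hd2.ne' hd1.ne']
  field_simp [hak.ne', has.ne', hτEu.ne', hτ.ne', hEu.ne', hβ.ne', (hα k).ne']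
  linear_combination (-(Eu * ∑ x, β * α x + σ2)) * mul_inv_cancel₀ (add_pos (mul_pos (mul_pos (mul_pos hEu hβ) (hα k)) hτ) hσ).ne'
end

section
/- Let s1, s2, t1, t2 > 0 and B ≥ 0 be reals, and let f(x) = (s1·x+s2)²/(t1·x+t2). Then for every x ∈ [0,B], f(x) ≤ max(f(0), f(B)); i.e. the maximum of f over the interval [0,B] is always attained at one of the two endpoints. -/
/-- Theorem 3, Case 3, of the paper: the SNR function
`f(x) = (s1 x + s2)²/(t1 x + t2)` attains its maximum over any interval `[0,B]`
at one of the two endpoints: `f(x) ≤ max (f 0) (f B)` for all `x ∈ [0,B]`. -/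
theorem stmt13 (s1 s2 t1 t2 B : ℝ)
    (hs1 : 0 < s1) (hs2 : 0 < s2) (ht1 : 0 < t1) (ht2 : 0 < t2) (hB : 0 ≤ B)
    (f : ℝ → ℝ) (hf : ∀ x, f x = (s1 * x + s2) ^ 2 / (t1 * x + t2)) :
    ∀ x ∈ Set.Icc (0 : ℝ) B, f x ≤ max (f 0) (f B) := by
  rintro x ⟨hx0, hxB⟩
  rcases eq_or_lt_of_le hB with h | hBpos
  · have hx : x = 0 := le_antisymm (hxB.trans h.symm.le) hx0
    subst hx
    exact le_max_left _ _
  have hu : 0 < t1 * x + t2 := by nlinarith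
  have hu0 : (0:ℝ) < t1 * 0 + t2 := by nlinarith
  have huB : 0 < t1 * B + t2 := by nlinarith
  -- chord inequality: B * f x ≤ (B - x) * f 0 + x * f B
  have key : B * f x ≤ (B - x) * f 0 + x * f B := by
    rw [hf, hf, hf]
    have expand : (B - x) * ((s1 * 0 + s2) ^ 2 / (t1 * 0 + t2)) + x * ((s1 * B + s2) ^ 2 / (t1 * B + t2)) = ((B - x) * (s1 * 0 + s2) ^ 2 * (t1 * B + t2) + x * (s1 * B + s2) ^ 2 * (t1 * 0 + t2)) / ((t1 * 0 + t2) * (t1 * B + t2)) := by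
      field_simp
    rw [expand, ← mul_div_assoc, div_le_div_iff₀ hu (mul_pos hu0 huB)]
    have h1 : 0 ≤ x * (B - x) := mul_nonneg hx0 (by linarith)
    nlinarith [mul_nonneg h1 (sq_nonneg (s1 * t2 - s2 * t1)), sq_nonneg (s1*t2 - s2*t1),
      mul_pos hu huB, mul_pos hu hu0]
  have hm0 : f 0 ≤ max (f 0) (f B) := le_max_left _ _
  have hmB : f B ≤ max (f 0) (f B) := le_max_right _ _
  have : B * f x ≤ B * max (f 0) (f B) := by
    calc B * f x ≤ (B - x) * f 0 + x * f B := key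
      _ ≤ (B - x) * max (f 0) (f B) + x * max (f 0) (f B) := by
          gcongr <;> linarith
      _ = B * max (f 0) (f B) := by ring
  exact le_of_mul_le_mul_left this hBpos
end

section
/- Let N ≥ 1, let A, B be N×N complex matrices, θ : Fin N → ℝ, n ∈ Fin N, and c : Fin N → ℂ defined by c_k = exp(i·θ_k). Define g : ℝ → ℂ by g(t) = trace(A · diagonal(c_t) · B · diagonal(star c_t)), where c_t is c with its n-th entry replaced by exp(i·t). Then g is differentiable at t = θ_n with derivative g′(θ_n) = −i·exp(−i·θ_n)·((A ⊙ Bᵀ) *ᵥ c)_n + i·((star c) ᵥ* (A ⊙ Bᵀ))_n·exp(i·θ_n), where ⊙ denotes the Hadamard (entrywise) matrix product. -/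
open Matrix

/-- Lemma 10 / Appendix I of the paper: the partial derivative of
`Tr(A Φ B Φᴴ)` with respect to the `n`-th RIS phase `θₙ`, where `Φ = diagonal c`
with `c = exp(i θ)`, equals
`-i e^{-i θₙ} ((A ⊙ Bᵀ) c)ₙ + i (cᴴ (A ⊙ Bᵀ))ₙ e^{i θₙ}`. -/
theorem stmt15 (N : ℕ) (hN : 1 ≤ N)
    (A B : Matrix (Fin N) (Fin N) ℂ)
    (θ : Fin N → ℝ) (n : Fin N)
    (c : Fin N → ℂ) (hc : ∀ k, c k = Complex.exp (Complex.I * (θ k : ℂ)))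
    (g : ℝ → ℂ)
    (hg : ∀ t : ℝ, g t =
        Matrix.trace (A * Matrix.diagonal (Function.update c n (Complex.exp (Complex.I * (t : ℂ))))
          * B * Matrix.diagonal (star (Function.update c n (Complex.exp (Complex.I * (t : ℂ))))))) :
    HasDerivAt g
      (-Complex.I * Complex.exp (-Complex.I * (θ n : ℂ)) * (Matrix.hadamard A Bᵀ *ᵥ c) n
        + Complex.I * (star c ᵥ* Matrix.hadamard A Bᵀ) n * Complex.exp (Complex.I * (θ n : ℂ)))
      (θ n) := by
  classical
  -- star of c i
  have hstar : ∀ t : ℝ, star (Complex.exp (Complex.I * (t : ℂ))) = Complex.exp (-Complex.I * (t : ℂ)) := by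
    intro t
    rw [Complex.star_def, ← Complex.exp_conj]
    simp [Complex.conj_I]
  -- rewrite g as explicit double sum
  have key : ∀ t : ℝ, g t = ∑ i : Fin N, ∑ l : Fin N, A i l * B l i *
      ((if l = n then Complex.exp (Complex.I * (t : ℂ)) else c l) *
       (if i = n then Complex.exp (-Complex.I * (t : ℂ)) else star (c i))) := by
    intro t
    rw [hg t]
    have h1 : Matrix.trace (A * Matrix.diagonal (Function.update c n (Complex.exp (Complex.I * (t : ℂ))))
          * B * Matrix.diagonal (star (Function.update c n (Complex.exp (Complex.I * (t : ℂ)))))) =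
        ∑ i : Fin N, ∑ l : Fin N, A i l * B l i *
          ((Function.update c n (Complex.exp (Complex.I * (t : ℂ)))) l *
           (star (Function.update c n (Complex.exp (Complex.I * (t : ℂ))))) i) := by
      simp [Matrix.trace, Matrix.diag, Matrix.mul_apply, Matrix.diagonal_apply,
        Finset.sum_mul, Finset.mul_sum]
      congr 1; ext i; congr 1; ext l; ring
    rw [h1]
    congr 1; ext i; congr 1; ext l
    congr 2
    · simp [Function.update_apply]
    · simp only [Pi.star_apply, Function.update_apply]
      split_ifs with h
      · exact hstar t
      · rfl
  have hgfun : g = fun t : ℝ => ∑ i : Fin N, ∑ l : Fin N, A i l * B l i *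
      ((if l = n then Complex.exp (Complex.I * (t : ℂ)) else c l) *
       (if i = n then Complex.exp (-Complex.I * (t : ℂ)) else star (c i))) := funext key
  rw [hgfun]
  -- basic derivatives
  have hre : HasDerivAt (fun t : ℝ => (t : ℂ)) 1 (θ n) := by
    simpa using (hasDerivAt_id (θ n)).ofReal_comp
  have hexpP : HasDerivAt (fun t : ℝ => Complex.exp (Complex.I * (t : ℂ)))
      (Complex.I * Complex.exp (Complex.I * (θ n : ℂ))) (θ n) := by
    have := (hre.const_mul Complex.I).cexp
    simpa [mul_comm] using this
  have hexpM : HasDerivAt (fun t : ℝ => Complex.exp (-Complex.I * (t : ℂ)))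
      (-Complex.I * Complex.exp (-Complex.I * (θ n : ℂ))) (θ n) := by
    have := (hre.const_mul (-Complex.I)).cexp
    simpa [mul_comm] using this
  -- per-term derivatives
  have hterm : ∀ i l : Fin N, HasDerivAt (fun t : ℝ => A i l * B l i *
      ((if l = n then Complex.exp (Complex.I * (t : ℂ)) else c l) *
       (if i = n then Complex.exp (-Complex.I * (t : ℂ)) else star (c i))))
      (A i l * B l i *
        ((if l = n then Complex.I * c n else 0) * (if i = n then star (c n) else star (c i))
         + (if l = n then c n else c l) * (if i = n then -Complex.I * star (c n) else 0)))
      (θ n) := by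
    intro i l
    have hcn : c n = Complex.exp (Complex.I * (θ n : ℂ)) := hc n
    have hscn : star (c n) = Complex.exp (-Complex.I * (θ n : ℂ)) := by
      rw [hcn]; exact hstar (θ n)
    have hφ : HasDerivAt (fun t : ℝ => (if l = n then Complex.exp (Complex.I * (t : ℂ)) else c l))
        (if l = n then Complex.I * c n else 0) (θ n) := by
      split_ifs with h
      · rw [hcn]; exact hexpP
      · exact hasDerivAt_const _ _
    have hψ : HasDerivAt (fun t : ℝ => (if i = n then Complex.exp (-Complex.I * (t : ℂ)) else star (c i)))
        (if i = n then -Complex.I * star (c n) else 0) (θ n) := by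
      split_ifs with h
      · rw [hscn]; exact hexpM
      · exact hasDerivAt_const _ _
    have := (hφ.mul hψ).const_mul (A i l * B l i)
    convert this using 1
    congr 1
    split_ifs with h1 h2 <;> simp [hcn, hscn, hstar]
    all_goals simp only [hcn, hscn, hstar]
  have hsum : HasDerivAt (fun t : ℝ => ∑ i : Fin N, ∑ l : Fin N, A i l * B l i *
      ((if l = n then Complex.exp (Complex.I * (t : ℂ)) else c l) *
       (if i = n then Complex.exp (-Complex.I * (t : ℂ)) else star (c i))))
      (∑ i : Fin N, ∑ l : Fin N, A i l * B l i *
        ((if l = n then Complex.I * c n else 0) * (if i = n then star (c n) else star (c i))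
         + (if l = n then c n else c l) * (if i = n then -Complex.I * star (c n) else 0)))
      (θ n) :=
    HasDerivAt.fun_sum (fun i _ => HasDerivAt.fun_sum (fun l _ => hterm i l))
  convert hsum using 1
  -- sum identity
  have hcn : c n = Complex.exp (Complex.I * (θ n : ℂ)) := hc n
  have hscn : star (c n) = Complex.exp (-Complex.I * (θ n : ℂ)) := by
    rw [hcn]; exact hstar (θ n)
  simp only [Matrix.mulVec, Matrix.vecMul, dotProduct, Matrix.hadamard_apply,
    Matrix.transpose_apply, Pi.star_apply, ← hcn, ← hscn]
  simp only [mul_add, Finset.sum_add_distrib, mul_ite, ite_mul, mul_zero, zero_mul]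
  have h1 : (∑ x : Fin N, ∑ x_1 : Fin N,
      if x = n then (if x_1 = n then A x x_1 * B x_1 x * (Complex.I * c n * star (c n)) else 0)
      else (if x_1 = n then A x x_1 * B x_1 x * (Complex.I * c n * star (c x)) else 0))
      = ∑ x : Fin N, A x n * B n x * (Complex.I * c n * star (c x)) := by
    refine Finset.sum_congr rfl fun x _ => ?_
    by_cases hx : x = n <;> simp [hx]
  have h2 : (∑ x : Fin N, ∑ x_1 : Fin N,
      if x = n then (if x_1 = n then A x x_1 * B x_1 x * (c n * (-Complex.I * star (c n)))
        else A x x_1 * B x_1 x * (c x_1 * (-Complex.I * star (c n)))) else 0)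
      = ∑ l : Fin N, A n l * B l n * (c l * (-Complex.I * star (c n))) := by
    have e : ∀ x : Fin N, (∑ x_1 : Fin N,
        if x = n then (if x_1 = n then A x x_1 * B x_1 x * (c n * (-Complex.I * star (c n)))
          else A x x_1 * B x_1 x * (c x_1 * (-Complex.I * star (c n)))) else 0)
        = if x = n then (∑ l : Fin N, A n l * B l n * (c l * (-Complex.I * star (c n)))) else 0 := by
      intro x
      by_cases hx : x = n
      · rw [if_pos hx, hx]
        refine Finset.sum_congr rfl fun l _ => ?_
        by_cases hl : l = n <;> simp [hl]
      · simp [hx]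
    simp only [e]
    simp
  rw [h1, h2, add_comm]
  congr 1
  · rw [Finset.mul_sum, Finset.sum_mul]
    exact Finset.sum_congr rfl (fun x _ => by ring)
  · rw [Finset.mul_sum]
    exact Finset.sum_congr rfl (fun x _ => by ring)
end
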